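/- Let k be a real number with 0 < k ≤ 1 and let α be a real number with 0 ≤ α ≤ 1. Then for every real x with 0 ≤ x ≤ k, one has (1+x)^α ≤ 1 + (((1+k)^α − 1)/k^α) · x^α. -/

import Mathlib

lemma aux_concave_sum (α a b c d : ℝ) (hα0 : 0 ≤ α) (hα1 : α ≤ 1)
    (ha : 0 ≤ a) (hac : a ≤ c) (hcb : c ≤ b) (hsum : a + b = c + d) :
    a ^ α + b ^ α ≤ c ^ α + d ^ α := by
  rcases eq_or_lt_of_le (hac.trans hcb) with hab | hab
  · have hc : c = a := le_antisymm (hab ▸ hcb) hac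
    have hd : d = b := by linarith
    rw [hc, hd]
  · set t : ℝ := (b - c) / (b - a) with ht
    have hba : 0 < b - a := by linarith
    have ht0 : 0 ≤ t := div_nonneg (by linarith) hba.le
    have ht1 : t ≤ 1 := (div_le_one hba).2 (by linarith)
    have hc : c = t * a + (1 - t) * b := by
      rw [ht]; field_simp; ring
    have hd : d = (1 - t) * a + t * b := by
      have : d = a + b - c := by linarith
      rw [this, hc]; ring
    have hb0 : 0 ≤ b := ha.trans (hac.trans hcb)
    have hcon := Real.concaveOn_rpow hα0 hα1
    have h1 := hcon.2 (Set.mem_Ici.2 ha) (Set.mem_Ici.2 hb0) ht0 (by linarith)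
      (by ring : t + (1 - t) = 1)
    have h2 := hcon.2 (Set.mem_Ici.2 ha) (Set.mem_Ici.2 hb0) (by linarith : (0:ℝ) ≤ 1 - t)
      ht0 (by ring : (1 - t) + t = 1)
    simp only [smul_eq_mul] at h1 h2
    rw [hc, hd]
    nlinarith [h1, h2]

theorem stmt_1 (k α x : ℝ) (hk0 : 0 < k) (hk1 : k ≤ 1) (hα0 : 0 ≤ α) (hα1 : α ≤ 1)
    (hx0 : 0 ≤ x) (hxk : x ≤ k) :
    (1 + x) ^ α ≤ 1 + ((1 + k) ^ α - 1) / k ^ α * x ^ α := by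
  have hkα : (0:ℝ) < k ^ α := Real.rpow_pos_of_pos hk0 α
  have key : x ^ α + (k * (1 + x)) ^ α ≤ (x * (1 + k)) ^ α + k ^ α := by
    apply aux_concave_sum α _ _ _ _ hα0 hα1 hx0
    · nlinarith
    · nlinarith
    · ring
  rw [Real.mul_rpow hx0 (by linarith), Real.mul_rpow hk0.le (by linarith)] at key
  rw [div_mul_eq_mul_div, ← sub_le_iff_le_add', le_div_iff₀ hkα]
  nlinarith [key]
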